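/- Let Δ_{3k-1} be the clique complex of the complement of the path P_{3k-1}. Then a subset F = {i_1 < ... < i_k} ⊆ [3k-1] with pairwise gaps ≥ 2 is a facet of Δ_{3k-1} of cardinality k if and only if i_1 ≤ 2, i_k ≥ 3k-2, and all consecutive gaps are ≤ 3; consequently the number of facets of cardinality k is exactly k+1. -/
import Mathlib


open Finset

attribute [local instance] Classical.propDecidable

/-- `s` is a face of the clique complex `Δ_n = Δ(P_nᶜ)` of the complement of the path
`P_n` on `[n] = {1, …, n}`: a subset of `[n]` whose elements have pairwise differences
at least 2. -/
def isFaceP (n : ℕ) (s : Finset ℕ) : Prop :=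
  s ⊆ Finset.Icc 1 n ∧ ∀ i ∈ s, ∀ j ∈ s, i < j → i + 2 ≤ j

/-- `s` is a facet (maximal face) of `Δ_n = Δ(P_nᶜ)`. -/
def isFacetP (n : ℕ) (s : Finset ℕ) : Prop :=
  isFaceP n s ∧ ∀ t, isFaceP n t → s ⊆ t → t = s


lemma facet_iff_aux (n : ℕ) (hn : 2 ≤ n) (s : Finset ℕ) (hs : isFaceP n s)
    (hne : s.Nonempty) :
    isFacetP n s ↔
      ((∃ x ∈ s, x ≤ 2) ∧ (∃ x ∈ s, n - 1 ≤ x) ∧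
        ∀ i ∈ s, ∀ j ∈ s, i < j → (∀ l ∈ s, ¬(i < l ∧ l < j)) → j ≤ i + 3) := by
  constructor
  · rintro ⟨hface, hmaxl⟩
    refine ⟨?_, ?_, ?_⟩
    · by_contra hc
      push_neg at hc
      set m := s.min' hne with hm
      have hmem : m ∈ s := s.min'_mem hne
      have hm3 : 3 ≤ m := hc _ hmem
      have hface' : isFaceP n (insert (m - 2) s) := by
        constructor
        · intro x hx
          rcases Finset.mem_insert.mp hx with rfl | hx
          · have h1 := hs.1 hmem
            simp only [Finset.mem_Icc] at h1 ⊢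
            omega
          · exact hs.1 hx
        · intro i hi j hj hij
          rcases Finset.mem_insert.mp hi with rfl | hi
          · rcases Finset.mem_insert.mp hj with h | hj
            · omega
            · have := s.min'_le _ hj
              omega
          · rcases Finset.mem_insert.mp hj with rfl | hj
            · have := s.min'_le _ hi
              omega
            · exact hs.2 i hi j hj hij
      have heq := hmaxl _ hface' (Finset.subset_insert _ _)
      have : m - 2 ∈ s := by rw [← heq]; exact Finset.mem_insert_self _ _
      have := s.min'_le _ this
      omega
    · by_contra hc
      push_neg at hc
      set M := s.max' hne with hM
      have hmem : M ∈ s := s.max'_mem hne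
      have hMn : M + 2 ≤ n := by
        have := hc _ hmem
        omega
      have hface' : isFaceP n (insert (M + 2) s) := by
        constructor
        · intro x hx
          rcases Finset.mem_insert.mp hx with rfl | hx
          · simp only [Finset.mem_Icc]; omega
          · exact hs.1 hx
        · intro i hi j hj hij
          rcases Finset.mem_insert.mp hi with rfl | hi
          · rcases Finset.mem_insert.mp hj with h | hj
            · omega
            · have := s.le_max' _ hj
              omega
          · rcases Finset.mem_insert.mp hj with rfl | hj
            · have := s.le_max' _ hi
              omega
            · exact hs.2 i hi j hj hij
      have heq := hmaxl _ hface' (Finset.subset_insert _ _)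
      have : M + 2 ∈ s := by rw [← heq]; exact Finset.mem_insert_self _ _
      have := s.le_max' _ this
      omega
    · intro i hi j hj hij hcons
      by_contra hc
      push_neg at hc
      have hsplit : ∀ l ∈ s, l ≤ i ∨ j ≤ l := by
        intro l hl
        by_contra h
        push_neg at h
        exact hcons l hl ⟨by omega, by omega⟩
      have hjn : j ≤ n := by
        have := hs.1 hj
        simp only [Finset.mem_Icc] at this
        omega
      have hface' : isFaceP n (insert (i + 2) s) := by
        constructor
        · intro x hx
          rcases Finset.mem_insert.mp hx with rfl | hx
          · simp only [Finset.mem_Icc]; omega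
          · exact hs.1 hx
        · intro a ha b hb hab
          rcases Finset.mem_insert.mp ha with rfl | ha
          · rcases Finset.mem_insert.mp hb with h | hb
            · omega
            · rcases hsplit b hb with h | h <;> omega
          · rcases Finset.mem_insert.mp hb with rfl | hb
            · rcases hsplit a ha with h | h <;> omega
            · exact hs.2 a ha b hb hab
      have heq := hmaxl _ hface' (Finset.subset_insert _ _)
      have hmem2 : i + 2 ∈ s := by rw [← heq]; exact Finset.mem_insert_self _ _
      exact hcons _ hmem2 ⟨by omega, by omega⟩
  · rintro ⟨⟨a, ha, ha2⟩, ⟨b, hb, hbn⟩, hgap⟩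
    refine ⟨hs, fun t ht hst => ?_⟩
    refine Finset.Subset.antisymm ?_ hst
    intro x hx
    by_contra hxs
    have hx1 : 1 ≤ x ∧ x ≤ n := by
      have := ht.1 hx
      simpa [Finset.mem_Icc] using this
    by_cases hA : ∃ i ∈ s, i < x
    · by_cases hB : ∃ j ∈ s, x < j
      · have hAne : (s.filter (fun i => i < x)).Nonempty := by
          obtain ⟨i, hi, hix⟩ := hA
          exact ⟨i, Finset.mem_filter.mpr ⟨hi, hix⟩⟩
        have hBne : (s.filter (fun j => x < j)).Nonempty := by
          obtain ⟨j, hj, hxj⟩ := hB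
          exact ⟨j, Finset.mem_filter.mpr ⟨hj, hxj⟩⟩
        set i := (s.filter (fun i => i < x)).max' hAne with hi
        set j := (s.filter (fun j => x < j)).min' hBne with hj
        have hiS : i ∈ s ∧ i < x :=
          Finset.mem_filter.mp ((s.filter (fun i => i < x)).max'_mem hAne)
        have hjS : j ∈ s ∧ x < j :=
          Finset.mem_filter.mp ((s.filter (fun j => x < j)).min'_mem hBne)
        have hcons : ∀ l ∈ s, ¬(i < l ∧ l < j) := by
          rintro l hl ⟨h1, h2⟩
          rcases lt_trichotomy l x with h | h | h
          · have : l ≤ i := (s.filter (fun i => i < x)).le_max' l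
              (Finset.mem_filter.mpr ⟨hl, h⟩)
            omega
          · exact hxs (h ▸ hl)
          · have : j ≤ l := (s.filter (fun j => x < j)).min'_le l
              (Finset.mem_filter.mpr ⟨hl, h⟩)
            omega
        have h3 := hgap i hiS.1 j hjS.1 (by omega) hcons
        have h4 := ht.2 i (hst hiS.1) x hx hiS.2
        have h5 := ht.2 x hx j (hst hjS.1) hjS.2
        omega
      · push_neg at hB
        have hbx : b ≤ x := hB b hb
        have : b < x := lt_of_le_of_ne hbx (fun h => hxs (h ▸ hb))
        have := ht.2 b (hst hb) x hx this
        omega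
    · push_neg at hA
      have hax : x ≤ a := hA a ha
      have : x < a := lt_of_le_of_ne hax (fun h => hxs (h ▸ ha))
      have := ht.2 x hx a (hst ha) this
      omega

def gfun (j m : ℕ) : ℕ := if m < j then 3 * m + 2 else 3 * m + 1

def fjS (k j : ℕ) : Finset ℕ := (Finset.range k).image (gfun j)

lemma gfun_lb (j m : ℕ) : 3 * m + 1 ≤ gfun j m := by
  unfold gfun; split <;> omega

lemma gfun_ub (j m : ℕ) : gfun j m ≤ 3 * m + 2 := by
  unfold gfun; split <;> omega

lemma gfun_strictMono (j : ℕ) {a b : ℕ} (h : a < b) : gfun j a < gfun j b := by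
  have h1 := gfun_ub j a
  have h2 := gfun_lb j b
  omega

lemma fjS_face (k j : ℕ) (hk : 1 ≤ k) : isFaceP (3 * k - 1) (fjS k j) := by
  constructor
  · intro x hx
    simp only [fjS, Finset.mem_image, Finset.mem_range] at hx
    obtain ⟨m, hm, rfl⟩ := hx
    have h1 := gfun_lb j m
    have h2 := gfun_ub j m
    simp only [Finset.mem_Icc]
    omega
  · intro i hi j' hj' hij
    simp only [fjS, Finset.mem_image, Finset.mem_range] at hi hj'
    obtain ⟨a, ha, rfl⟩ := hi
    obtain ⟨b, hb, rfl⟩ := hj'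
    have hab : a < b := by
      by_contra h
      push_neg at h
      rcases eq_or_lt_of_le h with h | h
      · subst h; omega
      · have := gfun_strictMono j h
        omega
    have h1 := gfun_ub j a
    have h2 := gfun_lb j b
    omega

lemma fjS_card (k j : ℕ) : (fjS k j).card = k := by
  rw [fjS, Finset.card_image_of_injOn, Finset.card_range]
  intro a _ b _ hab
  by_contra h
  rcases Nat.lt_or_ge a b with h' | h'
  · have := gfun_strictMono j h'; omega
  · rcases eq_or_lt_of_le h' with h' | h'
    · omega
    · have := gfun_strictMono j h'; omega

lemma fjS_facet (k j : ℕ) (hk : 1 ≤ k) (hjk : j ≤ k) : isFacetP (3 * k - 1) (fjS k j) := by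
  have hne : (fjS k j).Nonempty := by
    rw [← Finset.card_pos, fjS_card]; omega
  rw [facet_iff_aux (3 * k - 1) (by omega) _ (fjS_face k j hk) hne]
  refine ⟨?_, ?_, ?_⟩
  · refine ⟨gfun j 0, ?_, ?_⟩
    · simp only [fjS, Finset.mem_image, Finset.mem_range]
      exact ⟨0, by omega, rfl⟩
    · have := gfun_ub j 0; omega
  · refine ⟨gfun j (k - 1), ?_, ?_⟩
    · simp only [fjS, Finset.mem_image, Finset.mem_range]
      exact ⟨k - 1, by omega, rfl⟩
    · have := gfun_lb j (k - 1); omega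
  · intro i hi j' hj' hij hcons
    simp only [fjS, Finset.mem_image, Finset.mem_range] at hi hj'
    obtain ⟨a, ha, rfl⟩ := hi
    obtain ⟨b, hb, rfl⟩ := hj'
    have hab : a < b := by
      by_contra h
      push_neg at h
      rcases eq_or_lt_of_le h with h | h
      · subst h; omega
      · have := gfun_strictMono j h
        omega
    have hb1 : b = a + 1 := by
      by_contra h
      have ha1b : a + 1 < b := by omega
      have hlmem : gfun j (a + 1) ∈ fjS k j := by
        simp only [fjS, Finset.mem_image, Finset.mem_range]
        exact ⟨a + 1, by omega, rfl⟩
      exact hcons _ hlmem ⟨gfun_strictMono j (by omega), gfun_strictMono j ha1b⟩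
    subst hb1
    unfold gfun
    split_ifs <;> omega

lemma facet_eq_fjS (k : ℕ) (hk : 1 ≤ k) (s : Finset ℕ)
    (hcard : s.card = k) (hfacet : isFacetP (3 * k - 1) s) :
    ∃ j ≤ k, s = fjS k j := by
  have hface : isFaceP (3 * k - 1) s := hfacet.1
  have hne : s.Nonempty := by rw [← Finset.card_pos]; omega
  obtain ⟨⟨a, ha, ha2⟩, ⟨b, hb, hbn⟩, hgap⟩ :=
    (facet_iff_aux (3 * k - 1) (by omega) s hface hne).mp hfacet
  set e := s.orderEmbOfFin hcard with he
  set E : ℕ → ℕ := fun m => if h : m < k then e ⟨m, h⟩ else 0 with hE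
  have E_mem : ∀ m, m < k → E m ∈ s := by
    intro m hm
    simp only [hE, dif_pos hm]
    exact Finset.orderEmbOfFin_mem s hcard ⟨m, hm⟩
  have E_surj : ∀ x ∈ s, ∃ m, m < k ∧ E m = x := by
    intro x hx
    have : x ∈ Set.range e := by
      rw [Finset.range_orderEmbOfFin]
      exact hx
    obtain ⟨i, hi⟩ := this
    exact ⟨i.1, i.2, by simp [hE, dif_pos i.2, hi]⟩
  have E_mono : ∀ a b, a < b → b < k → E a < E b := by
    intro a b hab hbk
    have hak : a < k := by omega
    simp only [hE, dif_pos hak, dif_pos hbk]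
    exact (s.orderEmbOfFin hcard).strictMono (show (⟨a, hak⟩ : Fin k) < ⟨b, hbk⟩ from hab)
  have E_mono' : ∀ a b, a ≤ b → b < k → E a ≤ E b := by
    intro a b hab hbk
    rcases eq_or_lt_of_le hab with rfl | h
    · exact le_refl _
    · exact le_of_lt (E_mono a b h hbk)
  have h0 : E 0 ≤ 2 := by
    obtain ⟨m, hm, hma⟩ := E_surj a ha
    have := E_mono' 0 m (by omega) hm
    omega
  have hlast : 3 * k - 2 ≤ E (k - 1) := by
    obtain ⟨m, hm, hmb⟩ := E_surj b hb
    have := E_mono' m (k - 1) (by omega) (by omega)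
    omega
  have hgapl : ∀ m, m + 1 < k → E m + 2 ≤ E (m + 1) :=
    fun m hm => hface.2 _ (E_mem m (by omega)) _ (E_mem (m + 1) hm)
      (E_mono m (m + 1) (by omega) hm)
  have hgapu : ∀ m, m + 1 < k → E (m + 1) ≤ E m + 3 := by
    intro m hm
    refine hgap _ (E_mem m (by omega)) _ (E_mem (m + 1) hm)
      (E_mono m (m + 1) (by omega) hm) ?_
    rintro l hl ⟨h1, h2⟩
    obtain ⟨i, hi, rfl⟩ := E_surj l hl
    rcases Nat.lt_or_ge i (m + 1) with h | h
    · have := E_mono' i m (by omega) (by omega)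
      omega
    · have := E_mono' (m + 1) i h hi
      omega
  have hub : ∀ m, m < k → E m ≤ 3 * m + 2 := by
    intro m
    induction m with
    | zero => intro _; omega
    | succ n ih =>
      intro hm
      have h1 := ih (by omega)
      have h2 := hgapu n hm
      omega
  have hlbd : ∀ d, d < k → 3 * k - 2 ≤ E (k - 1 - d) + 3 * d := by
    intro d
    induction d with
    | zero => intro _; simpa using hlast
    | succ n ih =>
      intro hd
      have h1 := ih (by omega)
      have heq : k - 1 - (n + 1) + 1 = k - 1 - n := by omega
      have h2 := hgapu (k - 1 - (n + 1)) (by omega)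
      rw [heq] at h2
      omega
  have hlb : ∀ m, m < k → 3 * m + 1 ≤ E m := by
    intro m hm
    have h1 := hlbd (k - 1 - m) (by omega)
    have heq : k - 1 - (k - 1 - m) = m := by omega
    rw [heq] at h1
    omega
  -- j : first index where E m ≠ 3 m + 2
  have hex : ∃ m, ¬(m < k ∧ E m = 3 * m + 2) := ⟨k, by simp⟩
  set j := Nat.find hex with hj
  have hjk : j ≤ k := Nat.find_le (by simp)
  have hltj : ∀ m, m < j → E m = 3 * m + 2 := by
    intro m hm
    have := Nat.find_min hex hm
    push_neg at this
    exact this.2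
  have hgej : ∀ d, j + d < k → E (j + d) = 3 * (j + d) + 1 := by
    intro d
    induction d with
    | zero =>
      intro hd
      have hspec := Nat.find_spec hex
      rw [← hj] at hspec
      have h1 := hub j (by omega)
      have h2 := hlb j (by omega)
      simp only [Nat.add_zero]
      by_contra h
      exact hspec ⟨by omega, by omega⟩
    | succ n ih =>
      intro hd
      have h1 := ih (by omega)
      have h2 := hgapu (j + n) (by omega)
      have h3 := hlb (j + (n + 1)) hd
      have heq : j + n + 1 = j + (n + 1) := by omega
      rw [heq] at h2
      omega
  have hEg : ∀ m, m < k → E m = gfun j m := by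
    intro m hm
    unfold gfun
    split_ifs with h
    · exact hltj m h
    · have : m = j + (m - j) := by omega
      rw [this]
      exact hgej (m - j) (by omega)
  refine ⟨j, hjk, ?_⟩
  ext x
  simp only [fjS, Finset.mem_image, Finset.mem_range]
  constructor
  · intro hx
    obtain ⟨m, hm, rfl⟩ := E_surj x hx
    exact ⟨m, hm, (hEg m hm).symm⟩
  · rintro ⟨m, hm, rfl⟩
    rw [← hEg m hm]
    exact E_mem m hm

lemma fjS_inj (k : ℕ) {a b : ℕ} (ha : a ≤ k) (hb : b ≤ k) (h : fjS k a = fjS k b) :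
    a = b := by
  by_contra hne
  wlog hab : a < b generalizing a b
  · exact this hb ha h.symm (Ne.symm hne) (by omega)
  have hmem : gfun b a ∈ fjS k b := by
    simp only [fjS, Finset.mem_image, Finset.mem_range]
    exact ⟨a, by omega, rfl⟩
  rw [← h] at hmem
  simp only [fjS, Finset.mem_image, Finset.mem_range] at hmem
  obtain ⟨m, hm, hme⟩ := hmem
  have hval : gfun b a = 3 * a + 2 := by unfold gfun; rw [if_pos hab]
  unfold gfun at hme
  split_ifs at hme with h' <;> omega

/-- A `k`-element face `F = {i_1 < … < i_k}` of `Δ_{3k-1}` is a facet if and only if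
`i_1 ≤ 2`, `i_k ≥ 3k-2`, and all consecutive gaps are at most 3; consequently `Δ_{3k-1}`
has exactly `k + 1` facets of cardinality `k`. -/
theorem facets_card_k_of_path3k_sub_one (k : ℕ) (hk : 1 ≤ k) :
    (∀ s : Finset ℕ, isFaceP (3 * k - 1) s → s.card = k →
      (isFacetP (3 * k - 1) s ↔
        ((∃ x ∈ s, x ≤ 2) ∧ (∃ x ∈ s, 3 * k - 2 ≤ x) ∧
          ∀ i ∈ s, ∀ j ∈ s, i < j → (∀ l ∈ s, ¬(i < l ∧ l < j)) → j ≤ i + 3))) ∧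
      ((Finset.Icc 1 (3 * k - 1)).powerset.filter fun s =>
          isFacetP (3 * k - 1) s ∧ s.card = k).card = k + 1 := by
  constructor
  · intro s hs hcard
    have hne : s.Nonempty := by rw [← Finset.card_pos]; omega
    have h32 : (3 * k - 2 : ℕ) = 3 * k - 1 - 1 := by omega
    rw [h32]
    exact facet_iff_aux (3 * k - 1) (by omega) s hs hne
  · have hset : ((Finset.Icc 1 (3 * k - 1)).powerset.filter fun s =>
        isFacetP (3 * k - 1) s ∧ s.card = k) = (Finset.range (k + 1)).image (fjS k) := by
      ext s
      simp only [Finset.mem_filter, Finset.mem_powerset, Finset.mem_image, Finset.mem_range]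
      constructor
      · rintro ⟨hsub, hfacet, hcard⟩
        obtain ⟨j, hj, rfl⟩ := facet_eq_fjS k hk s hcard hfacet
        exact ⟨j, by omega, rfl⟩
      · rintro ⟨j, hj, rfl⟩
        exact ⟨(fjS_face k j hk).1, fjS_facet k j hk (by omega), fjS_card k j⟩
    rw [hset, Finset.card_image_of_injOn, Finset.card_range]
    intro a ha b hb hab
    simp only [Finset.mem_coe, Finset.mem_range] at ha hb
    exact fjS_inj k (by omega) (by omega) hab
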